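/- Under the hypotheses allowing differentiation under the integral sign (joint continuity of Ṡ(γ,x) = ∂_γ S(γ,x) and a locally uniform integrable dominating function for the γ-derivatives of both y ↦ σ(y)^{-2} exp(2∫_0^y S(γ,v)/σ(v)² dv) and y ↦ F(y) σ(y)^{-2} exp(2∫_0^y S(γ,v)/σ(v)² dv)), the function ϑ(γ) = ∫_ℝ F(y) f(γ,y) dy is differentiable and its derivative equals ϑ̇(γ) = 2( ∫_ℝ F(x)(∫_0^x Ṡ(γ,v)/σ(v)² dv) f(γ,x) dx − ϑ(γ) ∫_ℝ (∫_0^z Ṡ(γ,v)/σ(v)² dv) f(γ,z) dz ), which equals the double integral 2 ∫_ℝ ∫_ℝ F(x)(∫_z^x Ṡ(γ,v)/σ(v)² dv) f(γ,x) f(γ,z) dx dz, i.e., 2 E_γ[F(ξ) ∫_ζ^ξ Ṡ(γ,v)/σ(v)² dv] for ξ, ζ independent with density f(γ,·). -/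

import Mathlib

open MeasureTheory Real Set Filter intervalIntegral

set_option maxHeartbeats 1000000

noncomputable section

/-- Unnormalized invariant density for the parametric drift `S(γ, ·)`. -/
def paramKernel (σ : ℝ → ℝ) (S : ℝ → ℝ → ℝ) (γ y : ℝ) : ℝ :=
  ((σ y) ^ 2)⁻¹ * Real.exp (2 * ∫ v in (0:ℝ)..y, S γ v / (σ v) ^ 2)

/-- Normalizing constant `G(γ)`. -/
def paramG (σ : ℝ → ℝ) (S : ℝ → ℝ → ℝ) (γ : ℝ) : ℝ :=
  ∫ y : ℝ, paramKernel σ S γ y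

/-- Invariant density `f(γ, y) = G(γ)⁻¹ σ(y)⁻² exp(2 ∫_0^y S(γ,v)/σ(v)² dv)`. -/
def paramDens (σ : ℝ → ℝ) (S : ℝ → ℝ → ℝ) (γ y : ℝ) : ℝ :=
  (paramG σ S γ)⁻¹ * paramKernel σ S γ y

theorem primCont (σ : ℝ → ℝ) (hσc : Continuous σ) (hσpos : ∀ x, 0 < σ x)
    (h : ℝ → ℝ) (hh : Continuous h) :
    Continuous (fun y => ∫ v in (0:ℝ)..y, h v / (σ v) ^ 2) := by
  have hne : ∀ v, (σ v) ^ 2 ≠ 0 := fun v => (pow_pos (hσpos v) 2).ne'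
  have hc : Continuous (fun v => h v / (σ v) ^ 2) := hh.div (hσc.pow 2) hne
  exact intervalIntegral.continuous_primitive (fun a b => hc.intervalIntegrable a b) 0

theorem kernelCont (σ : ℝ → ℝ) (hσc : Continuous σ) (hσpos : ∀ x, 0 < σ x)
    (S : ℝ → ℝ → ℝ) (γ : ℝ) (hS : Continuous (S γ)) :
    Continuous (paramKernel σ S γ) := by
  have hne : ∀ v, (σ v) ^ 2 ≠ 0 := fun v => (pow_pos (hσpos v) 2).ne'
  exact ((hσc.pow 2).inv₀ hne).mul
    (Real.continuous_exp.comp (continuous_const.mul (primCont σ hσc hσpos (S γ) hS)))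

theorem kernelPos (σ : ℝ → ℝ) (hσpos : ∀ x, 0 < σ x)
    (S : ℝ → ℝ → ℝ) (γ y : ℝ) : 0 < paramKernel σ S γ y :=
  mul_pos (inv_pos.2 (pow_pos (hσpos y) 2)) (Real.exp_pos _)

/-- Lemma A: derivative of the primitive in the parameter. -/
theorem derivI (σ : ℝ → ℝ) (hσc : Continuous σ) (hσpos : ∀ x, 0 < σ x)
    (Γ : Set ℝ) (hΓopen : IsOpen Γ)
    (S Sdot : ℝ → ℝ → ℝ)
    (hScont : ∀ γ ∈ Γ, Continuous (S γ))
    (hSdot : ∀ x : ℝ, ∀ γ ∈ Γ, HasDerivAt (fun γ' => S γ' x) (Sdot γ x) γ)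
    (hSdotCont : Continuous (Function.uncurry Sdot))
    (y : ℝ) (γ : ℝ) (hγ : γ ∈ Γ) :
    HasDerivAt (fun γ' => ∫ v in (0:ℝ)..y, S γ' v / (σ v) ^ 2)
      (∫ v in (0:ℝ)..y, Sdot γ v / (σ v) ^ 2) γ := by
  have hne : ∀ v, (σ v) ^ 2 ≠ 0 := fun v => (pow_pos (hσpos v) 2).ne'
  obtain ⟨ε, hε, hball⟩ := Metric.isOpen_iff.1 hΓopen γ hγ
  have hK : IsCompact (Metric.closedBall γ (ε/2) ×ˢ uIcc (0:ℝ) y) :=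
    (isCompact_closedBall _ _).prod isCompact_uIcc
  obtain ⟨C, hC⟩ := hK.exists_bound_of_continuousOn hSdotCont.continuousOn
  have hsub : Metric.ball γ (ε/2) ⊆ Γ :=
    (Metric.ball_subset_ball (by linarith)).trans hball
  have hε2 : (0:ℝ) < ε/2 := half_pos hε
  have hmeas : ∀ᶠ x in nhds γ,
      AEStronglyMeasurable (fun t => S x t / (σ t) ^ 2) (volume.restrict (Set.uIoc (0:ℝ) y)) := by
    refine Filter.eventually_of_mem (hΓopen.mem_nhds hγ) (fun x hx => ?_)
    exact ((hScont x hx).div (hσc.pow 2) hne).aestronglyMeasurable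
  have hint : IntervalIntegrable (fun t => S γ t / (σ t) ^ 2) volume 0 y :=
    ((hScont γ hγ).div (hσc.pow 2) hne).intervalIntegrable _ _
  have h'meas : AEStronglyMeasurable (fun t => Sdot γ t / (σ t) ^ 2)
      (volume.restrict (Set.uIoc (0:ℝ) y)) :=
    ((hSdotCont.comp (Continuous.prodMk_right γ)).div (hσc.pow 2) hne).aestronglyMeasurable
  have hbound : ∀ᵐ t ∂(volume : Measure ℝ), t ∈ Set.uIoc (0:ℝ) y →
      ∀ x ∈ Metric.ball γ (ε/2), ‖Sdot x t / (σ t) ^ 2‖ ≤ C * ((σ t) ^ 2)⁻¹ := by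
    refine Filter.Eventually.of_forall (fun t ht x hx => ?_)
    have h1 : |Sdot x t| ≤ C := by
      have := hC (x, t) ⟨Metric.ball_subset_closedBall hx, uIoc_subset_uIcc ht⟩
      simpa [Function.uncurry] using this
    rw [Real.norm_eq_abs, div_eq_mul_inv, abs_mul, abs_inv,
      abs_of_nonneg (pow_pos (hσpos t) 2).le]
    exact mul_le_mul_of_nonneg_right h1 (inv_nonneg.2 (pow_pos (hσpos t) 2).le)
  have bnd : IntervalIntegrable (fun t => C * ((σ t) ^ 2)⁻¹) volume 0 y :=
    (continuous_const.mul ((hσc.pow 2).inv₀ hne)).intervalIntegrable _ _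
  have hdiff : ∀ᵐ t ∂(volume : Measure ℝ), t ∈ Set.uIoc (0:ℝ) y →
      ∀ x ∈ Metric.ball γ (ε/2),
        HasDerivAt (fun x' => S x' t / (σ t) ^ 2) (Sdot x t / (σ t) ^ 2) x :=
    Filter.Eventually.of_forall (fun t _ x hx => (hSdot t x (hsub hx)).div_const _)
  exact (intervalIntegral.hasDerivAt_integral_of_dominated_loc_of_deriv_le
    (F := fun x t => S x t / (σ t) ^ 2) (F' := fun x t => Sdot x t / (σ t) ^ 2)
    (Metric.ball_mem_nhds γ hε2) hmeas hint h'meas hbound bnd hdiff).2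

/-- Lemma B: derivative of the kernel in the parameter. -/
theorem derivKernel (σ : ℝ → ℝ) (hσc : Continuous σ) (hσpos : ∀ x, 0 < σ x)
    (Γ : Set ℝ) (hΓopen : IsOpen Γ)
    (S Sdot : ℝ → ℝ → ℝ)
    (hScont : ∀ γ ∈ Γ, Continuous (S γ))
    (hSdot : ∀ x : ℝ, ∀ γ ∈ Γ, HasDerivAt (fun γ' => S γ' x) (Sdot γ x) γ)
    (hSdotCont : Continuous (Function.uncurry Sdot))
    (y : ℝ) (γ : ℝ) (hγ : γ ∈ Γ) :
    HasDerivAt (fun γ' => paramKernel σ S γ' y)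
      (2 * (∫ v in (0:ℝ)..y, Sdot γ v / (σ v) ^ 2) * paramKernel σ S γ y) γ := by
  have h1 := (derivI σ hσc hσpos Γ hΓopen S Sdot hScont hSdot hSdotCont y γ hγ).const_mul 2
  have h2 : HasDerivAt (fun γ' => ((σ y) ^ 2)⁻¹ * Real.exp (2 * ∫ v in (0:ℝ)..y, S γ' v / (σ v) ^ 2))
      (((σ y) ^ 2)⁻¹ * (Real.exp (2 * ∫ v in (0:ℝ)..y, S γ v / (σ v) ^ 2)
        * (2 * ∫ v in (0:ℝ)..y, Sdot γ v / (σ v) ^ 2))) γ :=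
    (h1.exp).const_mul (((σ y) ^ 2)⁻¹)
  convert h2 using 1
  · simp only [paramKernel]
  simp only [paramKernel]
  ring

/-- Under hypotheses permitting differentiation under the integral sign
(joint continuity of `Ṡ` and locally uniform integrable dominating functions for the
γ-derivatives of both `y ↦ σ(y)⁻² exp(2∫_0^y S(γ,v)/σ(v)²dv)` and
`y ↦ F(y) σ(y)⁻² exp(2∫_0^y S(γ,v)/σ(v)²dv)`), the function `ϑ(γ) = ∫ F f(γ,·)` is
differentiable with derivative
`ϑ̇(γ) = 2(∫ F(x)(∫_0^x Ṡ/σ²) f(γ,x) dx − ϑ(γ) ∫ (∫_0^z Ṡ/σ²) f(γ,z) dz)`, which equals the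
double integral `2 ∫∫ F(x)(∫_z^x Ṡ/σ²) f(γ,x) f(γ,z) dx dz = 2 E_γ[F(ξ) ∫_ζ^ξ Ṡ/σ² dv]`. -/
theorem moment_estimation_stmt11
    (σ : ℝ → ℝ) (hσc : Continuous σ) (hσpos : ∀ x, 0 < σ x)
    (Γ : Set ℝ) (hΓopen : IsOpen Γ) (hΓconn : Γ.OrdConnected)
    (S Sdot : ℝ → ℝ → ℝ)
    (hScont : ∀ γ ∈ Γ, Continuous (S γ))
    (hGfin : ∀ γ ∈ Γ, Integrable (paramKernel σ S γ))
    (F : ℝ → ℝ) (hFm : Measurable F)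
    (hFint : ∀ γ ∈ Γ, Integrable (fun y => |F y| * paramDens σ S γ y))
    (hSdot : ∀ x : ℝ, ∀ γ ∈ Γ, HasDerivAt (fun γ' => S γ' x) (Sdot γ x) γ)
    (hSdotCont : Continuous (Function.uncurry Sdot))
    (hdom : ∀ γ₀ ∈ Γ, ∃ δ > (0:ℝ), ∃ g₁ g₂ : ℝ → ℝ, Integrable g₁ ∧ Integrable g₂ ∧
      ∀ γ : ℝ, |γ - γ₀| < δ → ∀ y : ℝ,
        |2 * (∫ v in (0:ℝ)..y, Sdot γ v / (σ v) ^ 2) * paramKernel σ S γ y| ≤ g₁ y ∧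
        |F y * (2 * (∫ v in (0:ℝ)..y, Sdot γ v / (σ v) ^ 2)) * paramKernel σ S γ y| ≤ g₂ y) :
    ∀ γ ∈ Γ,
      HasDerivAt (fun γ' => ∫ y : ℝ, F y * paramDens σ S γ' y)
        (2 * ((∫ x : ℝ, F x * (∫ v in (0:ℝ)..x, Sdot γ v / (σ v) ^ 2) * paramDens σ S γ x)
          - (∫ y : ℝ, F y * paramDens σ S γ y)
            * ∫ z : ℝ, (∫ v in (0:ℝ)..z, Sdot γ v / (σ v) ^ 2) * paramDens σ S γ z)) γ ∧
      2 * ((∫ x : ℝ, F x * (∫ v in (0:ℝ)..x, Sdot γ v / (σ v) ^ 2) * paramDens σ S γ x)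
          - (∫ y : ℝ, F y * paramDens σ S γ y)
            * ∫ z : ℝ, (∫ v in (0:ℝ)..z, Sdot γ v / (σ v) ^ 2) * paramDens σ S γ z)
        = 2 * ∫ x : ℝ, ∫ z : ℝ,
            F x * (∫ v in z..x, Sdot γ v / (σ v) ^ 2) * paramDens σ S γ x * paramDens σ S γ z := by
  intro γ hγ
  have hne : ∀ v, (σ v) ^ 2 ≠ 0 := fun v => (pow_pos (hσpos v) 2).ne'
  have hkpos : ∀ y, 0 < paramKernel σ S γ y := kernelPos σ hσpos S γ
  have hkcont : Continuous (paramKernel σ S γ) := kernelCont σ hσc hσpos S γ (hScont γ hγ)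
  have hJcont : Continuous (fun y => ∫ v in (0:ℝ)..y, Sdot γ v / (σ v) ^ 2) :=
    primCont σ hσc hσpos (Sdot γ) (hSdotCont.comp (Continuous.prodMk_right γ))
  -- positivity of G
  have hGpos : 0 < paramG σ S γ := by
    rw [paramG]
    rw [integral_pos_iff_support_of_nonneg (fun y => (hkpos y).le) (hGfin γ hγ)]
    have : Function.support (paramKernel σ S γ) = Set.univ :=
      Set.eq_univ_of_forall fun y => (hkpos y).ne'
    rw [this]
    simp
  have hGne : paramG σ S γ ≠ 0 := hGpos.ne'
  -- ball inside Γ and the domination ball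
  obtain ⟨δ, hδ, g₁, g₂, hg₁, hg₂, hbnd⟩ := hdom γ hγ
  obtain ⟨ε₀, hε₀, hball⟩ := Metric.isOpen_iff.1 hΓopen γ hγ
  set ε := min δ ε₀ with hεdef
  have hε : 0 < ε := lt_min hδ hε₀
  have hballΓ : Metric.ball γ ε ⊆ Γ := (Metric.ball_subset_ball (min_le_right _ _)).trans hball
  have hballδ : ∀ x ∈ Metric.ball γ ε, |x - γ| < δ := by
    intro x hx
    have := Metric.mem_ball.1 hx
    rw [Real.dist_eq] at this
    exact lt_of_lt_of_le this (min_le_left _ _)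
  -- differentiate G under the integral
  have hGmain := hasDerivAt_integral_of_dominated_loc_of_deriv_le
    (μ := (volume : Measure ℝ))
    (F := fun x a => paramKernel σ S x a)
    (F' := fun x a => 2 * (∫ v in (0:ℝ)..a, Sdot x v / (σ v) ^ 2) * paramKernel σ S x a)
    (bound := g₁) (Metric.ball_mem_nhds γ hε)
    (Filter.eventually_of_mem (hΓopen.mem_nhds hγ) (fun x hx =>
      (kernelCont σ hσc hσpos S x (hScont x hx)).aestronglyMeasurable))
    (hGfin γ hγ)
    (((continuous_const.mul hJcont).mul hkcont).aestronglyMeasurable)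
    (Filter.Eventually.of_forall (fun a x hx => by
      rw [Real.norm_eq_abs]
      exact (hbnd x (hballδ x hx) a).1))
    hg₁
    (Filter.Eventually.of_forall (fun a x hx =>
      derivKernel σ hσc hσpos Γ hΓopen S Sdot hScont hSdot hSdotCont a x (hballΓ hx)))
  obtain ⟨hG'int, hGderiv⟩ := hGmain
  -- integrability of F·kernel at γ
  have hdensm : AEStronglyMeasurable (paramDens σ S γ) volume :=
    (continuous_const.mul hkcont).aestronglyMeasurable
  have hFkint : Integrable (fun a => F a * paramKernel σ S γ a) := by
    refine Integrable.mono' ((hFint γ hγ).const_mul (paramG σ S γ))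
      ((hFm.mul hkcont.measurable).aestronglyMeasurable)
      (Filter.Eventually.of_forall (fun a => ?_))
    rw [Real.norm_eq_abs, abs_mul, abs_of_pos (hkpos a)]
    have : paramG σ S γ * (|F a| * paramDens σ S γ a) = |F a| * paramKernel σ S γ a := by
      simp only [paramDens]
      field_simp
    rw [this]
  -- differentiate H under the integral
  have hHmain := hasDerivAt_integral_of_dominated_loc_of_deriv_le
    (μ := (volume : Measure ℝ))
    (F := fun x a => F a * paramKernel σ S x a)
    (F' := fun x a => F a * (2 * (∫ v in (0:ℝ)..a, Sdot x v / (σ v) ^ 2)) * paramKernel σ S x a)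
    (bound := g₂) (Metric.ball_mem_nhds γ hε)
    (Filter.eventually_of_mem (hΓopen.mem_nhds hγ) (fun x hx =>
      (hFm.mul (kernelCont σ hσc hσpos S x (hScont x hx)).measurable).aestronglyMeasurable))
    hFkint
    (((hFm.mul (continuous_const.mul hJcont).measurable).mul hkcont.measurable).aestronglyMeasurable)
    (Filter.Eventually.of_forall (fun a x hx => by
      rw [Real.norm_eq_abs]
      exact (hbnd x (hballδ x hx) a).2))
    hg₂
    (Filter.Eventually.of_forall (fun a x hx => by
      have := (derivKernel σ hσc hσpos Γ hΓopen S Sdot hScont hSdot hSdotCont a x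
        (hballΓ hx)).const_mul (F a)
      simpa [mul_assoc] using this))
  obtain ⟨hH'int, hHderiv⟩ := hHmain
  -- shorthand
  set J : ℝ → ℝ := fun y => ∫ v in (0:ℝ)..y, Sdot γ v / (σ v) ^ 2 with hJdef
  set Gγ : ℝ := paramG σ S γ with hGdef
  set P : ℝ := ∫ x : ℝ, F x * J x * paramKernel σ S γ x with hPdef
  set Q : ℝ := ∫ z : ℝ, J z * paramKernel σ S γ z with hQdef
  set Hγ : ℝ := ∫ y : ℝ, F y * paramKernel σ S γ y with hHdef
  -- rewrite the integral of F·dens as G⁻¹ · H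
  have hfun : (fun γ' => ∫ y : ℝ, F y * paramDens σ S γ' y)
      = fun γ' => (paramG σ S γ')⁻¹ * ∫ y : ℝ, F y * paramKernel σ S γ' y := by
    funext γ'
    rw [← MeasureTheory.integral_const_mul _ _]
    congr 1
    funext y
    simp only [paramDens]
    ring
  -- value identities
  have eqG' : (∫ a : ℝ, 2 * (∫ v in (0:ℝ)..a, Sdot γ v / (σ v) ^ 2) * paramKernel σ S γ a)
      = 2 * Q := by
    rw [hQdef, ← MeasureTheory.integral_const_mul _ _]
    congr 1
    funext a
    ring
  have eqH' : (∫ a : ℝ, F a * (2 * (∫ v in (0:ℝ)..a, Sdot γ v / (σ v) ^ 2)) * paramKernel σ S γ a)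
      = 2 * P := by
    rw [hPdef, ← MeasureTheory.integral_const_mul _ _]
    congr 1
    funext a
    ring
  have eqA : (∫ x : ℝ, F x * J x * paramDens σ S γ x) = Gγ⁻¹ * P := by
    rw [hPdef, ← MeasureTheory.integral_const_mul _ _]
    congr 1
    funext x
    simp only [paramDens]
    ring
  have eqB : (∫ z : ℝ, J z * paramDens σ S γ z) = Gγ⁻¹ * Q := by
    rw [hQdef, ← MeasureTheory.integral_const_mul _ _]
    congr 1
    funext z
    simp only [paramDens]
    ring
  have eqθ : (∫ y : ℝ, F y * paramDens σ S γ y) = Gγ⁻¹ * Hγ := by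
    have := congrFun hfun γ
    simpa [hGdef, hHdef] using this
  -- the derivative of θ
  have hGinv : HasDerivAt (fun γ' => (paramG σ S γ')⁻¹) (-(2 * Q) / Gγ ^ 2) γ := by
    rw [← eqG']
    exact hGderiv.inv hGne
  have hθderiv : HasDerivAt
      (fun γ' => (paramG σ S γ')⁻¹ * ∫ y : ℝ, F y * paramKernel σ S γ' y)
      (-(2 * Q) / Gγ ^ 2 * Hγ + Gγ⁻¹ * (2 * P)) γ := by
    have := hGinv.mul hHderiv
    rw [eqH'] at this
    exact this
  -- the stated derivative value
  have hval : 2 * ((∫ x : ℝ, F x * J x * paramDens σ S γ x)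
      - (∫ y : ℝ, F y * paramDens σ S γ y) * ∫ z : ℝ, J z * paramDens σ S γ z)
      = -(2 * Q) / Gγ ^ 2 * Hγ + Gγ⁻¹ * (2 * P) := by
    rw [eqA, eqB, eqθ]
    field_simp
    ring
  constructor
  · rw [hfun, hval]
    exact hθderiv
  -- Part 2 : the double-integral identity
  · -- integrabilities
    have hdensint : Integrable (paramDens σ S γ) := by
      have := (hGfin γ hγ).const_mul (Gγ⁻¹)
      exact this
    have hdens_nonneg : ∀ y, 0 ≤ paramDens σ S γ y := fun y =>
      mul_nonneg (inv_nonneg.2 hGpos.le) (hkpos y).le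
    have hdens1 : (∫ z : ℝ, paramDens σ S γ z) = 1 := by
      simp only [paramDens, MeasureTheory.integral_const_mul _ _]
      rw [← hGdef, ← paramG]
      exact inv_mul_cancel₀ hGne
    have hIdens : Integrable (fun z => J z * paramDens σ S γ z) := by
      refine (hG'int.const_mul (Gγ⁻¹ / 2)).congr
        (Filter.Eventually.of_forall (fun z => ?_))
      simp only [paramDens]
      ring
    have hFIdens : Integrable (fun x => F x * J x * paramDens σ S γ x) := by
      refine (hH'int.const_mul (Gγ⁻¹ / 2)).congr
        (Filter.Eventually.of_forall (fun x => ?_))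
      simp only [paramDens]
      ring
    have hFdens : Integrable (fun y => F y * paramDens σ S γ y) := by
      refine Integrable.mono' (hFint γ hγ) ((hFm.mul
        (continuous_const.mul hkcont).measurable).aestronglyMeasurable)
        (Filter.Eventually.of_forall (fun y => ?_))
      rw [Real.norm_eq_abs, abs_mul, abs_of_nonneg (hdens_nonneg y)]
    -- interval integrability of Sdot γ / σ²
    have hIInt : ∀ a b : ℝ, IntervalIntegrable (fun v => Sdot γ v / (σ v) ^ 2) volume a b :=
      fun a b => (((hSdotCont.comp (Continuous.prodMk_right γ)).div (hσc.pow 2) hne)).intervalIntegrable a b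
    -- inner integral
    have hinner : ∀ x : ℝ, (∫ z : ℝ,
        F x * (∫ v in z..x, Sdot γ v / (σ v) ^ 2) * paramDens σ S γ x * paramDens σ S γ z)
        = F x * J x * paramDens σ S γ x
          - (F x * paramDens σ S γ x) * ∫ z : ℝ, J z * paramDens σ S γ z := by
      intro x
      have hJsub : ∀ z : ℝ, (∫ v in z..x, Sdot γ v / (σ v) ^ 2) = J x - J z := fun z =>
        (intervalIntegral.integral_interval_sub_left (hIInt 0 x) (hIInt 0 z)).symm
      have step1 : (∫ z : ℝ,
          F x * (∫ v in z..x, Sdot γ v / (σ v) ^ 2) * paramDens σ S γ x * paramDens σ S γ z)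
          = ∫ z : ℝ, ((F x * J x * paramDens σ S γ x) * paramDens σ S γ z
            - (F x * paramDens σ S γ x) * (J z * paramDens σ S γ z)) := by
        congr 1
        funext z
        rw [hJsub z]
        ring
      rw [step1, integral_sub (hdensint.const_mul _) (hIdens.const_mul _),
        MeasureTheory.integral_const_mul _ _, MeasureTheory.integral_const_mul _ _, hdens1]
      ring
    have houter : (∫ x : ℝ, ∫ z : ℝ,
        F x * (∫ v in z..x, Sdot γ v / (σ v) ^ 2) * paramDens σ S γ x * paramDens σ S γ z)
        = (∫ x : ℝ, F x * J x * paramDens σ S γ x)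
          - (∫ y : ℝ, F y * paramDens σ S γ y) * ∫ z : ℝ, J z * paramDens σ S γ z := by
      have step2 : (∫ x : ℝ, ∫ z : ℝ,
          F x * (∫ v in z..x, Sdot γ v / (σ v) ^ 2) * paramDens σ S γ x * paramDens σ S γ z)
          = ∫ x : ℝ, (F x * J x * paramDens σ S γ x
            - (F x * paramDens σ S γ x) * ∫ z : ℝ, J z * paramDens σ S γ z) := by
        congr 1
        funext x
        exact hinner x
      rw [step2, integral_sub hFIdens (hFdens.mul_const _), MeasureTheory.integral_mul_const _ _]
    rw [houter]

end
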